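/- Multivariable Andrews identity: ∑_{k} P_{H_1,H_2}(k) q^k equals the constant term in z of (∑_{k,d} P_{H_1}(k,d) z^d q^k) · (∑_{k,d} P_{H_2}(k,d) z^{-d} q^k), where k ranges over vectors of nonnegative integers indexed by a finite color set C and q^k = ∏_{c∈C} q_c^{k_c}. -/

import Mathlib

/-- If a `ℕ`-valued family is summable, its support is finite. -/
lemma nat_summable_finite_support (f : ℕ → ℕ) (h : Summable f) : {d | f d ≠ 0}.Finite := by
  by_contra hinf
  rw [← Set.not_infinite, not_not] at hinf
  obtain ⟨a, ha⟩ := h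
  rw [HasSum, nhds_discrete, Filter.tendsto_pure, SummationFilter.unconditional_filter, Filter.eventually_atTop] at ha
  obtain ⟨s₀, hs₀⟩ := ha
  obtain ⟨d, hd, hds₀⟩ := hinf.exists_notMem_finset s₀
  have h1 := hs₀ s₀ le_rfl
  have h2 := hs₀ (insert d s₀) (Finset.le_iff_subset.mpr (Finset.subset_insert _ _))
  rw [Finset.sum_insert hds₀, h1] at h2
  exact hd (by omega)

/-- Lists of fixed length with entries in a finite set form a finite set. -/
lemma aux_list_finite {α : Type*} {s : Set α} (hs : s.Finite) (d : ℕ) :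
    {L : List α | L.length = d ∧ ∀ v ∈ L, v ∈ s}.Finite := by
  induction d with
  | zero =>
    refine (Set.finite_singleton ([] : List α)).subset ?_
    rintro L ⟨h, -⟩
    simp [List.length_eq_zero_iff.mp h]
  | succ n ih =>
    refine ((hs.prod ih).image fun p => p.1 :: p.2).subset ?_
    rintro L ⟨hlen, hmem⟩
    cases L with
    | nil => simp at hlen
    | cons x t =>
      simp only [List.length_cons, Nat.add_right_cancel_iff] at hlen
      exact ⟨(x, t), ⟨hmem x (by simp), hlen, fun v hv => hmem v (by simp [hv])⟩, rfl⟩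

/-- Lists of fixed length with prescribed column sums form a finite set. -/
lemma aux_sum_finite {C : Type*} [Fintype C] [DecidableEq C] (k : C → ℕ) (d : ℕ) :
    {L : List (C → ℕ) | L.length = d ∧ ∀ c, (L.map fun v => v c).sum ≤ k c}.Finite := by
  refine (aux_list_finite (Set.finite_Iic k) d).subset ?_
  rintro L ⟨hlen, hsum⟩
  refine ⟨hlen, fun v hv => Set.mem_Iic.mpr fun c => ?_⟩
  exact le_trans (List.single_le_sum (fun x _ => Nat.zero_le x) _
    (List.mem_map_of_mem (f := fun v => v c) hv)) (hsum c)

lemma aux_ncard_prod {α β : Type*} (A : Set α) (B : Set β) :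
    (A ×ˢ B).ncard = A.ncard * B.ncard := by
  rw [← Nat.card_coe_set_eq, ← Nat.card_coe_set_eq, ← Nat.card_coe_set_eq,
    Nat.card_congr (Equiv.Set.prod A B), Nat.card_prod]

lemma aux_ncard_biUnion {ι α : Type*} [DecidableEq ι] (s : Finset ι) (f : ι → Set α)
    (hf : ∀ i ∈ s, (f i).Finite)
    (hd : ∀ i ∈ s, ∀ j ∈ s, i ≠ j → Disjoint (f i) (f j)) :
    (⋃ i ∈ s, f i).ncard = ∑ i ∈ s, (f i).ncard := by
  induction s using Finset.induction_on with
  | empty => simp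
  | @insert a s ha ih =>
    rw [Finset.sum_insert ha, Finset.set_biUnion_insert]
    have hUfin : (⋃ i ∈ s, f i).Finite :=
      Set.Finite.biUnion s.finite_toSet fun i hi => hf i (Finset.mem_insert_of_mem hi)
    have hdisj : Disjoint (f a) (⋃ i ∈ s, f i) := by
      rw [Set.disjoint_iUnion_right]
      intro i
      rw [Set.disjoint_iUnion_right]
      intro hi
      exact hd a (Finset.mem_insert_self a s) i (Finset.mem_insert_of_mem hi)
        (fun h => ha (h ▸ hi))
    rw [Set.ncard_union_eq hdisj (hf a (Finset.mem_insert_self a s)) hUfin,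
      ih (fun i hi => hf i (Finset.mem_insert_of_mem hi))
        (fun i hi j hj hij => hd i (Finset.mem_insert_of_mem hi) j
          (Finset.mem_insert_of_mem hj) hij)]

/-- `P_H(k,d)` in the colored setting: the number of `d`-tuples of vectors in `H`
whose column sums equal the vector `k`. -/
noncomputable def PHc {C : Type*} (H : Set (List (C → ℕ))) (k : C → ℕ) (d : ℕ) : ℕ :=
  {L : List (C → ℕ) | L ∈ H ∧ L.length = d ∧ ∀ c, (L.map fun v => v c).sum = k c}.ncard

/-- `P_{H₁,H₂}(k)`: the number of colored generalized Frobenius partitions of the vector `k`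
with top row in `H₁` and bottom row in `H₂`. -/
noncomputable def PHHc {C : Type*} (H₁ H₂ : Set (List (C → ℕ))) (k : C → ℕ) : ℕ :=
  {p : List (C → ℕ) × List (C → ℕ) | p.1 ∈ H₁ ∧ p.2 ∈ H₂ ∧ p.1.length = p.2.length ∧
    ∀ c, (p.1.map fun v => v c).sum + (p.2.map fun v => v c).sum = k c}.ncard

/-- Multivariable Andrews identity: `∑_k P_{H₁,H₂}(k) q^k` equals the constant term in `z` of
`(∑ P_{H₁}(k,d) z^d q^k)(∑ P_{H₂}(k,d) z^{-d} q^k)`, expressed coefficient-wise in `q`: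
for each vector `k`, the coefficient is the sum over `d` of the convolution at `k`. -/
theorem andrews_colored {C : Type*} [Fintype C] [DecidableEq C]
    (H₁ H₂ : Set (List (C → ℕ))) (k : C → ℕ) :
    PHHc H₁ H₂ k =
      ∑' d : ℕ, ∑ k₁ ∈ Finset.Iic k, PHc H₁ k₁ d * PHc H₂ (k - k₁) d := by
  classical
  set S : ℕ → Set (List (C → ℕ) × List (C → ℕ)) := fun d =>
    {p | p.1 ∈ H₁ ∧ p.2 ∈ H₂ ∧ p.1.length = d ∧ p.2.length = d ∧
      ∀ c, (p.1.map fun v => v c).sum + (p.2.map fun v => v c).sum = k c} with hS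
  -- the pieces indexed by column-sum of the first row
  have hkey : ∀ d, (∑ k₁ ∈ Finset.Iic k, PHc H₁ k₁ d * PHc H₂ (k - k₁) d) = (S d).ncard := by
    intro d
    set A : (C → ℕ) → Set (List (C → ℕ)) := fun k₁ =>
      {L | L ∈ H₁ ∧ L.length = d ∧ ∀ c, (L.map fun v => v c).sum = k₁ c} with hA
    set B : (C → ℕ) → Set (List (C → ℕ)) := fun k₁ =>
      {L | L ∈ H₂ ∧ L.length = d ∧ ∀ c, (L.map fun v => v c).sum = (k - k₁) c} with hB
    have hAfin : ∀ k₁, (A k₁).Finite := fun k₁ =>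
      (aux_sum_finite k₁ d).subset fun L hL => ⟨hL.2.1, fun c => le_of_eq (hL.2.2 c)⟩
    have hBfin : ∀ k₁, (B k₁).Finite := fun k₁ =>
      (aux_sum_finite (k - k₁) d).subset fun L hL => ⟨hL.2.1, fun c => le_of_eq (hL.2.2 c)⟩
    have hdecomp : S d = ⋃ k₁ ∈ Finset.Iic k, (A k₁) ×ˢ (B k₁) := by
      ext p
      simp only [hS, Set.mem_setOf_eq, Set.mem_iUnion, Set.mem_prod, exists_prop]
      constructor
      · rintro ⟨h1, h2, h3, h4, h5⟩
        refine ⟨fun c => (p.1.map fun v => v c).sum, ?_, ⟨h1, h3, fun c => rfl⟩,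
          ⟨h2, h4, fun c => ?_⟩⟩
        · rw [Finset.mem_Iic]
          intro c
          show (p.1.map fun v => v c).sum ≤ k c
          exact h5 c ▸ Nat.le_add_right _ _
        · show (p.2.map fun v => v c).sum = k c - (p.1.map fun v => v c).sum
          exact Nat.eq_sub_of_add_eq' (h5 c)
      · rintro ⟨k₁, hk₁, ⟨h1, h3, hs1⟩, ⟨h2, h4, hs2⟩⟩
        rw [Finset.mem_Iic] at hk₁
        refine ⟨h1, h2, h3, h4, fun c => ?_⟩
        have e2 := hs2 c
        simp only [Pi.sub_apply] at e2
        rw [hs1 c, e2]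
        exact Nat.add_sub_cancel' (hk₁ c)
    rw [hdecomp, aux_ncard_biUnion]
    · refine Finset.sum_congr rfl fun k₁ _ => ?_
      rw [aux_ncard_prod]
      rfl
    · exact fun k₁ _ => (hAfin k₁).prod (hBfin k₁)
    · intro i hi j hj hij
      rw [Set.disjoint_left]
      rintro p ⟨⟨-, -, hsi⟩, -⟩ ⟨⟨-, -, hsj⟩, -⟩
      exact hij (funext fun c => (hsi c).symm.trans (hsj c))
  rw [tsum_congr hkey]
  have hSfin : ∀ d, (S d).Finite := by
    intro d
    refine ((aux_sum_finite k d).prod (aux_sum_finite k d)).subset ?_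
    rintro ⟨L₁, L₂⟩ ⟨-, -, h3, h4, h5⟩
    exact ⟨⟨h3, fun c => h5 c ▸ Nat.le_add_right _ _⟩, ⟨h4, fun c => h5 c ▸ Nat.le_add_left _ _⟩⟩
  have hU : {p : List (C → ℕ) × List (C → ℕ) | p.1 ∈ H₁ ∧ p.2 ∈ H₂ ∧
      p.1.length = p.2.length ∧
      ∀ c, (p.1.map fun v => v c).sum + (p.2.map fun v => v c).sum = k c} = ⋃ d, S d := by
    ext p
    simp only [Set.mem_setOf_eq, Set.mem_iUnion, hS]
    constructor
    · rintro ⟨h1, h2, h3, h4⟩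
      exact ⟨p.1.length, h1, h2, rfl, h3.symm, h4⟩
    · rintro ⟨d, h1, h2, h3, h4, h5⟩
      exact ⟨h1, h2, h3.trans h4.symm, h5⟩
  rw [PHHc, hU]
  by_cases hT : {d | (S d).ncard ≠ 0}.Finite
  · rw [tsum_eq_sum (s := hT.toFinset) (fun d hd => by simpa using hd)]
    have hU2 : ⋃ d, S d = ⋃ d ∈ hT.toFinset, S d := by
      ext p
      simp only [Set.mem_iUnion, Set.Finite.mem_toFinset, Set.mem_setOf_eq, exists_prop]
      constructor
      · rintro ⟨d, hd⟩
        exact ⟨d, ((Set.ncard_pos (hSfin d)).mpr ⟨p, hd⟩).ne', hd⟩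
      · rintro ⟨d, -, hd⟩
        exact ⟨d, hd⟩
    rw [hU2, aux_ncard_biUnion]
    · exact fun d _ => hSfin d
    · intro i hi j hj hij
      rw [Set.disjoint_left]
      rintro p ⟨-, -, hpi, -⟩ ⟨-, -, hpj, -⟩
      exact hij (hpi.symm.trans hpj)
  · have hnots : ¬ Summable (fun d => (S d).ncard) := fun hs =>
      hT (nat_summable_finite_support _ hs)
    rw [tsum_eq_zero_of_not_summable hnots]
    have hinf : (⋃ d, S d).Infinite := by
      intro hfin
      apply hT
      refine (hfin.image fun p => p.1.length).subset ?_
      intro d hd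
      rw [Set.mem_setOf_eq, ← Nat.pos_iff_ne_zero, Set.ncard_pos (hSfin d)] at hd
      obtain ⟨p, hp⟩ := hd
      exact ⟨p, Set.mem_iUnion.mpr ⟨d, hp⟩, hp.2.2.1⟩
    exact Set.Infinite.ncard hinf
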